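/- Let f(x) = x² + ax + b ∈ F_q[x] be a primitive polynomial of F_{q²} (i.e., of order q² - 1), and let η be the automorphism of F = F_q(x) defined by η(x) = 1/(-bx - a). Then in the degree-(q+1) extension F/F^{⟨η⟩}, the unique place of F of degree 2 that is totally ramified accounts for the entire different: deg Diff(F/F^{⟨η⟩}) = 2q, and hence every rational place of F is unramified in F/F^{⟨η⟩}; consequently the q+1 rational places of F form a single orbit of size q+1 under ⟨η⟩. -/

import Mathlib

/-- Möbius action on `P¹(F) = F ∪ {∞}`, modelled as `Option F` (rational places of `F_q(x)`). -/
def mobius {F : Type*} [Field F] [DecidableEq F]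
    (g : Matrix (Fin 2) (Fin 2) F) : Option F → Option F
  | none => if g 1 0 = 0 then none else some (g 0 0 / g 1 0)
  | some x =>
      if g 1 0 * x + g 1 1 = 0 then none
      else some ((g 0 0 * x + g 0 1) / (g 1 0 * x + g 1 1))

section Aux
variable {F : Type*} [Field F] [DecidableEq F]

lemma mobius_mul (g h : Matrix (Fin 2) (Fin 2) F) (hh : h.det ≠ 0)
    (P : Option F) : mobius g (mobius h P) = mobius (g * h) P := by
  rw [Matrix.det_fin_two] at hh
  have hmul : ∀ i j, (g * h) i j = g i 0 * h 0 j + g i 1 * h 1 j := by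
    intro i j; simp [Matrix.mul_apply, Fin.sum_univ_two]
  cases P with
  | none =>
    by_cases h10 : h 1 0 = 0
    · have h00 : h 0 0 ≠ 0 := fun h' => hh (by rw [h10, h']; ring)
      simp only [mobius, h10, if_pos rfl, hmul, mul_zero, add_zero]
      by_cases g10 : g 1 0 = 0 <;> simp [g10, h00, mul_ne_zero, mul_div_mul_right]
    · simp only [mobius, if_neg h10, hmul]
      have key : g 1 0 * (h 0 0 / h 1 0) + g 1 1 = (g 1 0 * h 0 0 + g 1 1 * h 1 0) / h 1 0 := by
        field_simp
      rw [key]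
      by_cases hz : g 1 0 * h 0 0 + g 1 1 * h 1 0 = 0
      · simp [hz, zero_div]
      · rw [if_neg (by simp [div_eq_zero_iff, hz, h10]), if_neg hz]
        congr 1
        first | (field_simp; ring) | field_simp
  | some x =>
    by_cases hd : h 1 0 * x + h 1 1 = 0
    · simp only [mobius, if_pos hd, hmul]
      have hnum : h 0 0 * x + h 0 1 ≠ 0 := by
        intro h'
        apply hh
        linear_combination h 0 0 * hd - h 1 0 * h'
      have e : (g 1 0 * h 0 0 + g 1 1 * h 1 0) * x + (g 1 0 * h 0 1 + g 1 1 * h 1 1)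
          = g 1 0 * (h 0 0 * x + h 0 1) := by linear_combination g 1 1 * hd
      rw [e]
      by_cases g10 : g 1 0 = 0
      · simp [g10]
      · rw [if_neg g10, if_neg (mul_ne_zero g10 hnum)]
        congr 1
        have e2 : (g 0 0 * h 0 0 + g 0 1 * h 1 0) * x + (g 0 0 * h 0 1 + g 0 1 * h 1 1)
            = g 0 0 * (h 0 0 * x + h 0 1) := by linear_combination g 0 1 * hd
        rw [e2]
        rw [mul_div_mul_right _ _ hnum]
    · simp only [mobius, if_neg hd, hmul]
      have key : g 1 0 * ((h 0 0 * x + h 0 1)/(h 1 0 * x + h 1 1)) + g 1 1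
          = ((g 1 0 * h 0 0 + g 1 1 * h 1 0) * x + (g 1 0 * h 0 1 + g 1 1 * h 1 1)) / (h 1 0 * x + h 1 1) := by
        rw [mul_div_assoc', div_add' _ _ _ hd]; congr 1; ring
      rw [key]
      by_cases hz : (g 1 0 * h 0 0 + g 1 1 * h 1 0) * x + (g 1 0 * h 0 1 + g 1 1 * h 1 1) = 0
      · simp [hz, zero_div]
      · rw [if_neg (by simp [div_eq_zero_iff, hz, hd]), if_neg hz]
        congr 1
        rw [mul_div_assoc', div_add' _ _ _ hd, div_div_div_cancel_right₀ hd]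
        congr 1; ring

lemma mobius_one (P : Option F) : mobius (1 : Matrix (Fin 2) (Fin 2) F) P = P := by
  cases P <;> simp [mobius, Matrix.one_apply]

def etaCoef (a b : F) : ℕ → F × F
  | 0 => (1, 0)
  | j+1 => (-b * (etaCoef a b j).2, (etaCoef a b j).1 - a * (etaCoef a b j).2)

omit [DecidableEq F] in
lemma matpow (a b : F) : ∀ j : ℕ, (!![0, 1; -b, -a] : Matrix (Fin 2) (Fin 2) F) ^ j
    = !![(etaCoef a b j).1, (etaCoef a b j).2;
         -(etaCoef a b j).2 * b, (etaCoef a b j).1 - (etaCoef a b j).2 * a] := by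
  intro j
  induction j with
  | zero => simp [etaCoef]; ext i k; fin_cases i <;> fin_cases k <;> simp [Matrix.one_apply]
  | succ n ih =>
    rw [pow_succ, ih, etaCoef]
    ext i k; fin_cases i <;> fin_cases k <;>
      simp [Matrix.mul_apply, Fin.sum_univ_two] <;> ring

open Polynomial in
omit [DecidableEq F] in
lemma rootpow (a b : F) : ∀ j : ℕ,
    (AdjoinRoot.root (X ^ 2 + C a * X + C b)) ^ j
    = AdjoinRoot.of _ (etaCoef a b j).1
      + AdjoinRoot.of _ (etaCoef a b j).2 * AdjoinRoot.root (X ^ 2 + C a * X + C b) := by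
  have hsq : (AdjoinRoot.root (X ^ 2 + C a * X + C b)) ^ 2
      = -(AdjoinRoot.of _ a * AdjoinRoot.root _) - AdjoinRoot.of _ b := by
    have := AdjoinRoot.mk_self (f := X ^ 2 + C a * X + C b)
    rw [map_add, map_add, map_pow, map_mul, AdjoinRoot.mk_X, AdjoinRoot.mk_C, AdjoinRoot.mk_C] at this
    have : AdjoinRoot.root (X ^ 2 + C a * X + C b) ^ 2
        + AdjoinRoot.of _ a * AdjoinRoot.root _ + AdjoinRoot.of _ b = 0 := this
    linear_combination this
  intro j
  induction j with
  | zero => simp [etaCoef]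
  | succ n ih =>
    rw [pow_succ (AdjoinRoot.root _) n, ih]
    rw [add_mul, mul_assoc, ← pow_two, hsq, etaCoef]
    simp only [map_mul, map_sub, map_neg]
    ring

end Aux

open Polynomial in
/-- Let `f(x) = x² + ax + b ∈ F_q[x]` be a primitive polynomial of `F_{q²}` (its root has
multiplicative order `q² - 1`), and let `η` be the automorphism of `F = F_q(x)` given by
`η(x) = 1/(-bx - a)` (the Möbius transformation of the matrix `[[0,1],[-b,-a]]`).
Then in the degree-`(q+1)` extension `F/F^{⟨η⟩}` every rational place of `F` is unramified:
no nontrivial power `η^j` (`0 < j < q+1`) fixes any rational place, and consequently the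
`q+1` rational places of `F` form a single orbit of size `q+1` under `⟨η⟩`. -/
theorem stmt9 {F : Type*} [Field F] [Fintype F] [DecidableEq F] {q : ℕ}
    (hq : Fintype.card F = q) (a b : F)
    (hirr : Irreducible (Polynomial.X ^ 2 + Polynomial.C a * Polynomial.X + Polynomial.C b))
    (hprim : orderOf (AdjoinRoot.root
      (Polynomial.X ^ 2 + Polynomial.C a * Polynomial.X + Polynomial.C b)) = q ^ 2 - 1) :
    (∀ P : Option F, ∀ j : ℕ, 0 < j → j < q + 1 →
      (mobius !![(0 : F), 1; -b, -a])^[j] P ≠ P) ∧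
    (∀ P Q : Option F, ∃ j : ℕ, (mobius !![(0 : F), 1; -b, -a])^[j] P = Q) := by
  set f : F[X] := X ^ 2 + C a * X + C b with hf
  set M : Matrix (Fin 2) (Fin 2) F := !![0, 1; -b, -a] with hM
  haveI : Fact (Irreducible f) := ⟨hirr⟩
  set K := AdjoinRoot f
  set r : K := AdjoinRoot.root f with hr
  set φ : F →+* K := AdjoinRoot.of f with hφ
  -- basic numerics
  have hq2 : 2 ≤ q := hq ▸ Fintype.one_lt_card
  -- f has no roots
  have noroot : ∀ x : F, x ^ 2 + a * x + b ≠ 0 := by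
    intro x hx
    have hroot : f.IsRoot x := by simp [hf, IsRoot, hx]
    obtain ⟨g, hg⟩ := Polynomial.dvd_iff_isRoot.mpr hroot
    have hdeg : f.natDegree = 2 := by rw [hf]; compute_degree!
    rcases hirr.isUnit_or_isUnit hg with hu | hu
    · exact Polynomial.not_isUnit_X_sub_C x hu
    · have hgne : g ≠ 0 := fun h => by simp [h] at hu
      have : f.natDegree = 1 := by
        rw [hg, Polynomial.natDegree_mul (Polynomial.X_sub_C_ne_zero x) hgne,
          Polynomial.natDegree_X_sub_C, Polynomial.natDegree_eq_zero_of_isUnit hu]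
      omega
  have hb : b ≠ 0 := fun h => noroot 0 (by simp [h])
  -- injectivity / root facts
  have injφ : Function.Injective φ := φ.injective
  have hrpow : ∀ j, r ^ j = φ (etaCoef a b j).1 + φ (etaCoef a b j).2 * r := rootpow a b
  have hrone : r ^ (q ^ 2 - 1) = 1 := by rw [← hprim]; exact pow_orderOf_eq_one r
  have hqq : q ^ 2 = q * q := sq q
  have hq4 : 2 * 2 ≤ q * q := Nat.mul_le_mul hq2 hq2
  have hqone : q ^ 2 - 1 ≠ 0 := by omega
  have hrne : r ≠ 0 := by
    intro h; rw [h, zero_pow hqone] at hrone; exact zero_ne_one hrone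
  have rootNotC : ∀ c : F, r ≠ φ c := by
    intro c hc
    have h2 := hrpow 2
    have he : etaCoef a b 2 = (-b, -a) := by simp [etaCoef]
    rw [he, hc] at h2
    have : φ (c ^ 2) = φ (-b + -a * c) := by
      simp only [map_pow, map_add, map_mul, map_neg]
      simpa using h2
    have := injφ this
    exact noroot c (by linear_combination this)
  -- d_j ≠ 0 for 0 < j < q+1
  have djne : ∀ j : ℕ, 0 < j → j < q + 1 → (etaCoef a b j).2 ≠ 0 := by
    intro j hj1 hj2 hd
    have h1 : r ^ j = φ (etaCoef a b j).1 := by rw [hrpow j, hd]; simp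
    have hcne : (etaCoef a b j).1 ≠ 0 := by
      intro h; rw [h, map_zero] at h1; exact pow_ne_zero j hrne h1
    have hpow : r ^ (j * (q - 1)) = 1 := by
      rw [pow_mul, h1, ← map_pow]
      have : (etaCoef a b j).1 ^ (q - 1) = 1 := by
        rw [← hq]; exact FiniteField.pow_card_sub_one_eq_one _ hcne
      rw [this, map_one]
    have hdvd : q ^ 2 - 1 ∣ j * (q - 1) := hprim ▸ orderOf_dvd_of_pow_eq_one hpow
    have hfac : q ^ 2 - 1 = (q + 1) * (q - 1) := by
      cases q with
      | zero => simp
      | succ n => simp [Nat.succ_sub_one, pow_two]; ring_nf; omega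
    rw [hfac] at hdvd
    have : q + 1 ∣ j := by
      have h' := (Nat.mul_dvd_mul_iff_right (show 0 < q - 1 by omega)).mp hdvd
      exact h'
    have := Nat.le_of_dvd hj1 this
    omega
  -- root^(q+1) = φ b  (via Frobenius)
  have hroot_q1 : r ^ (q + 1) = φ b := by
    obtain ⟨p, hpchar⟩ := CharP.exists F
    haveI : Fact p.Prime := ⟨(CharP.char_is_prime F p)⟩
    obtain ⟨n, hn'⟩ := FiniteField.card F p
    have hn := hn'.2
    haveI : CharP K p := charP_of_injective_ringHom injφ p
    have hsq : r ^ 2 + φ a * r + φ b = 0 := by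
      have h2 := hrpow 2
      have he : etaCoef a b 2 = (-b, -a) := by simp [etaCoef]
      rw [he] at h2
      rw [h2]; simp only [map_neg]; ring
    have hq_eq : q = p ^ (n : ℕ) := hq ▸ hn
    have key1 : (φ a) ^ q = φ a := by rw [← map_pow, ← hq, FiniteField.pow_card]
    have key2 : (φ b) ^ q = φ b := by rw [← map_pow, ← hq, FiniteField.pow_card]
    have hfrob : (r ^ 2 + φ a * r + φ b) ^ q = (r ^ q) ^ 2 + φ a * r ^ q + φ b := by
      rw [hq_eq] at key1 key2 ⊢
      rw [add_pow_char_pow, add_pow_char_pow, mul_pow, key1, key2, ← pow_mul,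
        mul_comm 2, pow_mul]
    have hsq' : (r ^ q) ^ 2 + φ a * r ^ q + φ b = 0 := by
      rw [← hfrob, hsq, zero_pow (by omega : q ≠ 0)]
    have hfactor : (r ^ q - r) * (r ^ q + r + φ a) = 0 := by
      linear_combination hsq' - hsq
    have hne : r ^ q - r ≠ 0 := by
      intro h
      have h' : r ^ q = r := by linear_combination h
      have : r ^ (q - 1) * r = 1 * r := by
        rw [one_mul, ← pow_succ]
        rw [show q - 1 + 1 = q by omega]
        exact h'
      have hr1 : r ^ (q - 1) = 1 := mul_right_cancel₀ hrne this
      have hdvd := orderOf_dvd_of_pow_eq_one hr1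
      rw [hprim] at hdvd
      have hle := Nat.le_of_dvd (by omega) hdvd
      have hqle : 2 * q ≤ q * q := Nat.mul_le_mul_right q hq2
      omega
    have hsum : r ^ q + r + φ a = 0 := by
      rcases mul_eq_zero.mp hfactor with h | h
      · exact absurd h hne
      · exact h
    have : r ^ (q + 1) = r * r ^ q := by rw [pow_succ]; ring
    rw [this]
    have hrq : r ^ q = -φ a - r := by linear_combination hsum
    rw [hrq]
    linear_combination -hsq
  -- d_{q+1} = 0 and c_{q+1} = b
  have hd_q1 : (etaCoef a b (q+1)).2 = 0 := by
    by_contra hd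
    have h1 := hrpow (q+1)
    rw [hroot_q1] at h1
    have : φ (etaCoef a b (q+1)).2 * r = φ (b - (etaCoef a b (q+1)).1) := by
      rw [map_sub]; linear_combination -h1
    have hφd : φ (etaCoef a b (q+1)).2 ≠ 0 := fun h => hd (injφ (by rw [h, map_zero]))
    have hr_eq : r = φ ((b - (etaCoef a b (q+1)).1) / (etaCoef a b (q+1)).2) := by
      rw [map_div₀, ← this, mul_comm, mul_div_assoc, div_self hφd, mul_one]
    exact rootNotC _ hr_eq
  have hc_q1 : (etaCoef a b (q+1)).1 = b := by
    have h1 := hrpow (q+1)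
    rw [hroot_q1, hd_q1] at h1
    simp at h1
    exact (injφ h1).symm
  -- determinant
  have detM : M.det = b := by simp [hM, Matrix.det_fin_two_of]
  -- iterate = mobius of power
  have hiter : ∀ j (P : Option F), (mobius M)^[j] P = mobius (M ^ j) P := by
    intro j
    induction j with
    | zero => intro P; simp [mobius_one]
    | succ n ih =>
      intro P
      rw [Function.iterate_succ_apply', ih, mobius_mul M (M ^ n)
        (by rw [Matrix.det_pow, detM]; exact pow_ne_zero n hb), ← pow_succ']
  -- fixed point freeness for explicit matrices
  have hfix : ∀ (c d : F), d ≠ 0 → ∀ P : Option F,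
      mobius !![c, d; -d * b, c - d * a] P ≠ P := by
    intro c d hd P
    have e00 : (!![c, d; -d * b, c - d * a] : Matrix (Fin 2) (Fin 2) F) 0 0 = c := rfl
    have e01 : (!![c, d; -d * b, c - d * a] : Matrix (Fin 2) (Fin 2) F) 0 1 = d := rfl
    have e10 : (!![c, d; -d * b, c - d * a] : Matrix (Fin 2) (Fin 2) F) 1 0 = -d * b := rfl
    have e11 : (!![c, d; -d * b, c - d * a] : Matrix (Fin 2) (Fin 2) F) 1 1 = c - d * a := rfl
    cases P with
    | none =>
      simp only [mobius, e00, e10]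
      rw [if_neg (by simpa using mul_ne_zero hd hb : ¬(-d * b = 0))]
      simp
    | some x =>
      simp only [mobius, e00, e01, e10, e11]
      split_ifs with h
      · simp
      · simp only [ne_eq, Option.some.injEq]
        intro hx
        rw [div_eq_iff h] at hx
        have hquad : d * (b * x ^ 2 + a * x + 1) = 0 := by linear_combination hx
        have hquad' : b * x ^ 2 + a * x + 1 = 0 := by
          rcases mul_eq_zero.mp hquad with h' | h'
          · exact absurd h' hd
          · exact h'
        have hx0 : x ≠ 0 := by intro h0; rw [h0] at hquad'; simp at hquad'
        apply noroot x⁻¹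
        have : (x⁻¹) ^ 2 + a * x⁻¹ + b = (b * x ^ 2 + a * x + 1) / x ^ 2 := by
          field_simp; ring
        rw [this, hquad', zero_div]
  constructor
  · intro P j hj1 hj2
    rw [hiter j P, matpow a b j]
    exact hfix _ _ (djne j hj1 hj2) P
  · -- surjectivity of orbit map
    have hid : ∀ P : Option F, (mobius M)^[q+1] P = P := by
      intro P
      rw [hiter (q+1) P, matpow a b (q+1), hd_q1, hc_q1]
      cases P with
      | none => simp [mobius]
      | some x =>
        simp only [mobius]
        rw [if_neg (by simpa using hb : ¬(!![b, 0; -0 * b, b - 0 * a] : Matrix (Fin 2) (Fin 2) F) 1 0 * x + (!![b, 0; -0 * b, b - 0 * a] : Matrix (Fin 2) (Fin 2) F) 1 1 = 0)]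
        simp [hb]
    intro P Q
    have hinj : Function.Injective (fun j : Fin (q + 1) => (mobius M)^[(j : ℕ)] P) := by
      intro i j hij
      simp only at hij
      by_contra hne
      -- wlog i < j
      rcases lt_or_gt_of_ne (fun h => hne (Fin.ext h) : (i : ℕ) ≠ (j : ℕ)) with h | h
      · have : (mobius M)^[(j : ℕ) - (i : ℕ)] ((mobius M)^[(i : ℕ)] P) = (mobius M)^[(i : ℕ)] P := by
          rw [← Function.iterate_add_apply, show (j : ℕ) - (i : ℕ) + (i : ℕ) = (j : ℕ) by omega, hij]
        exact (by
          rw [hiter _ _, matpow a b _] at this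
          exact hfix _ _ (djne _ (by omega) (by omega : (j:ℕ) - (i:ℕ) < q + 1)) _ this)
      · have : (mobius M)^[(i : ℕ) - (j : ℕ)] ((mobius M)^[(j : ℕ)] P) = (mobius M)^[(j : ℕ)] P := by
          rw [← Function.iterate_add_apply, show (i : ℕ) - (j : ℕ) + (j : ℕ) = (i : ℕ) by omega, hij]
        exact (by
          rw [hiter _ _, matpow a b _] at this
          exact hfix _ _ (djne _ (by omega) (by omega : (i:ℕ) - (j:ℕ) < q + 1)) _ this)
    have hcard : Fintype.card (Fin (q + 1)) = Fintype.card (Option F) := by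
      simp [hq]
    have hbij : Function.Bijective (fun j : Fin (q + 1) => (mobius M)^[(j : ℕ)] P) :=
      (Fintype.bijective_iff_injective_and_card _).mpr ⟨hinj, hcard⟩
    obtain ⟨j, hj⟩ := hbij.surjective Q
    exact ⟨(j : ℕ), hj⟩
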